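/- Both roots (possibly complex) of the quadratic equation x² - c x - d = 0 with real coefficients c, d have modulus strictly less than 1 if and only if |c| < 1 - d < 2. -/

import Mathlib

private lemma real_root_coe (c d t : ℝ) (h : t^2 - c*t - d = 0) :
    (t:ℂ)^2 - (c:ℂ)*(t:ℂ) - (d:ℂ) = 0 := by
  have := congrArg (fun x : ℝ => (x : ℂ)) h
  push_cast at this
  simpa using this

theorem quadratic_roots_modulus_lt_one (c d : ℝ) :
    (∀ z : ℂ, z ^ 2 - (c : ℂ) * z - (d : ℂ) = 0 → ‖z‖ < 1) ↔
      (|c| < 1 - d ∧ 1 - d < 2) := by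
  constructor
  · intro h
    rcases le_or_gt 0 (c^2 + 4*d) with hΔ | hΔ
    · -- real roots
      set s := Real.sqrt (c^2 + 4*d) with hsdef
      have hs2 : s^2 = c^2 + 4*d := Real.sq_sqrt hΔ
      have h1 : ((c + s)/2 : ℝ)^2 - c * ((c+s)/2) - d = 0 := by nlinarith [hs2]
      have h2 : ((c - s)/2 : ℝ)^2 - c * ((c-s)/2) - d = 0 := by nlinarith [hs2]
      have a1 : |((c+s)/2 : ℝ)| < 1 := by
        have := h _ (real_root_coe c d _ h1)
        rwa [Complex.norm_real, Real.norm_eq_abs] at this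
      have a2 : |((c-s)/2 : ℝ)| < 1 := by
        have := h _ (real_root_coe c d _ h2)
        rwa [Complex.norm_real, Real.norm_eq_abs] at this
      rw [abs_lt] at a1 a2
      obtain ⟨a1l, a1r⟩ := a1
      obtain ⟨a2l, a2r⟩ := a2
      constructor
      · rw [abs_lt]
        constructor <;> nlinarith [hs2, mul_pos (by linarith : (0:ℝ) < 1 - (c+s)/2) (by linarith : (0:ℝ) < 1 - (c-s)/2), mul_pos (by linarith : (0:ℝ) < 1 + (c+s)/2) (by linarith : (0:ℝ) < 1 + (c-s)/2)]
      · nlinarith [hs2, mul_pos (by linarith : (0:ℝ) < 1 - (c+s)/2) (by linarith : (0:ℝ) < 1 + (c-s)/2), mul_pos (by linarith : (0:ℝ) < 1 + (c+s)/2) (by linarith : (0:ℝ) < 1 - (c-s)/2)]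
    · -- complex conjugate roots
      set u := Real.sqrt (-(c^2 + 4*d)) with hudef
      have hu2 : u^2 = -(c^2 + 4*d) := Real.sq_sqrt (by linarith)
      have hupos : 0 < u := Real.sqrt_pos.mpr (by linarith)
      set z : ℂ := ⟨c/2, u/2⟩ with hzdef
      have hzre : z.re = c/2 := rfl
      have hzim : z.im = u/2 := rfl
      have hz : z ^ 2 - (c : ℂ) * z - (d : ℂ) = 0 := by
        apply Complex.ext <;>
          simp [pow_two, Complex.mul_re, Complex.mul_im, hzre, hzim] <;>
          nlinarith [hu2]
      have habs := h z hz
      have hsq : ‖z‖^2 = c^2/4 + u^2/4 := by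
        rw [Complex.sq_norm, Complex.normSq_apply, hzre, hzim]; ring
      have hlt : c^2/4 + u^2/4 < 1 := by
        nlinarith [habs, norm_nonneg z, hsq]
      constructor
      · rw [abs_lt]
        constructor <;> nlinarith [hu2, sq_nonneg (c-2), sq_nonneg (c+2)]
      · nlinarith [hu2]
  · rintro ⟨h1, h2⟩ z hz
    have hd1 : d < 1 := by have := abs_nonneg c; linarith
    have hd2 : -1 < d := by linarith
    rw [abs_lt] at h1
    obtain ⟨h1l, h1r⟩ := h1
    have hre := congrArg Complex.re hz
    have him := congrArg Complex.im hz
    simp [pow_two, Complex.mul_re, Complex.mul_im] at hre him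
    set x := z.re
    set y := z.im
    have key : x^2 + y^2 < 1 := by
      rcases eq_or_ne y 0 with hy | hy
      · rw [hy] at hre ⊢
        have hx : x * x - c * x - d = 0 := by nlinarith [hre]
        rcases le_or_gt 0 x with hxs | hxs
        · nlinarith [sq_nonneg (x-1), sq_nonneg (x+1), mul_nonneg (by linarith : (0:ℝ) ≤ 1 - d - c) hxs]
        · nlinarith [sq_nonneg (x-1), sq_nonneg (x+1), mul_nonneg (by linarith : (0:ℝ) ≤ 1 - d + c) (by linarith : (0:ℝ) ≤ -x)]
      · have hcx : 2 * x = c := by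
          have : y * (x + x - c) = 0 := by linarith [him]
          rcases mul_eq_zero.mp this with h | h
          · exact absurd h hy
          · linarith
        nlinarith [hre]
    have hsq : ‖z‖^2 = x^2 + y^2 := by
      rw [Complex.sq_norm, Complex.normSq_apply]; ring
    have h3 : ‖z‖ ^ 2 < 1 := by rw [hsq]; exact key
    have hnn := norm_nonneg z
    have h4 := (sq_lt_one_iff_abs_lt_one _).mp h3
    rwa [abs_of_nonneg hnn] at h4
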